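/- Let ν : ℝ³ → ℝ be measurable with ν₀(1+|v|) ≤ ν(v) ≤ ν₁(1+|v|) for constants ν₀, ν₁ > 0, and let M(v) = (2π)^{−3/2} e^{−|v|²/2}. For ε ∈ [0,1], ξ ∈ ℝ³ \ {0}, δ > 0 and λ ∈ ℂ with Re λ ≥ −ν₀ + δ, define the bounded linear operator S_{λ,ε,ξ} on L²(ℝ³) by (S_{λ,ε,ξ} f)(v) = |ξ|^{−2} (v·ξ) √M(v) · ∫_{ℝ³} (λ + ν(u) + iε u·ξ)^{−1} f(u) √M(u) du. Then there exists C > 0 depending only on ν₀, ν₁ such that: (1) ‖S_{λ,ε,ξ}‖ ≤ C δ^{−1} |ξ|^{−1}; and (2) if λ ≠ 0, ‖S_{λ,ε,ξ}‖ ≤ C (δ^{−1} + 1)(|ξ|^{−1} + 1) |λ|^{−1}. -/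

import Mathlib

noncomputable section

open MeasureTheory

/-- The normalized global Maxwellian `M(v) = (2π)^{−3/2} e^{−|v|²/2}` on `ℝ³`. -/
def Mx (v : EuclideanSpace ℝ (Fin 3)) : ℝ :=
  (2 * Real.pi) ^ (-(3:ℝ)/2) * Real.exp (-‖v‖^2 / 2)

/-- `(S_{λ,ε,ξ} f)(v) = |ξ|^{−2}(v·ξ)√M(v) ∫ (λ + ν(u) + iε u·ξ)^{−1} f(u) √M(u) du`. -/
def Smap (ν : EuclideanSpace ℝ (Fin 3) → ℝ) (lam : ℂ) (ε : ℝ)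
    (ξ : EuclideanSpace ℝ (Fin 3)) (f : EuclideanSpace ℝ (Fin 3) → ℂ)
    (v : EuclideanSpace ℝ (Fin 3)) : ℂ :=
  ((‖ξ‖^2)⁻¹ * (inner ℝ v ξ : ℝ) * Real.sqrt (Mx v) : ℝ) *
    ∫ u : EuclideanSpace ℝ (Fin 3),
      (lam + (ν u : ℂ) + Complex.I * ((ε * (inner ℝ u ξ : ℝ) : ℝ) : ℂ))⁻¹ *
        f u * ((Real.sqrt (Mx u) : ℝ) : ℂ)

namespace Stmt12Aux

open scoped ENNReal

local notation "E3" => EuclideanSpace ℝ (Fin 3)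

lemma mx_pos (v : E3) : 0 < Mx v := by
  unfold Mx; positivity

lemma mx_cont : Continuous Mx := by
  unfold Mx
  exact continuous_const.mul (Real.continuous_exp.comp
    (((continuous_norm.pow 2).neg).div_const 2))

lemma integrable_gauss {b : ℝ} (hb : 0 < b) :
    Integrable (fun v : E3 => Real.exp (-b * ‖v‖ ^ 2)) := by
  have h := (GaussianFourier.integrable_cexp_neg_mul_sq_norm_add (V := E3)
      (b := (b : ℂ)) (by simpa using hb) 0 0).re
  refine h.congr (Filter.Eventually.of_forall fun v => ?_)
  simp only [zero_mul, add_zero]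
  simp only [RCLike.re_to_complex]
  rw [show (-(b:ℂ) * (‖v‖:ℂ) ^ 2) = ((-b * ‖v‖ ^ 2 : ℝ) : ℂ) by push_cast; ring,
    Complex.exp_ofReal_re]

lemma integral_gauss {b : ℝ} (hb : 0 < b) :
    ∫ v : E3, Real.exp (-b * ‖v‖ ^ 2) = (Real.pi / b) ^ ((3:ℝ)/2) := by
  rw [GaussianFourier.integral_rexp_neg_mul_sq_norm hb, finrank_euclideanSpace_fin]
  norm_num

lemma lint_gauss {b c : ℝ} (hb : 0 < b) (hc : 0 ≤ c) :
    ∫⁻ v : E3, ENNReal.ofReal (c * Real.exp (-b * ‖v‖ ^ 2)) =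
      ENNReal.ofReal (c * (Real.pi / b) ^ ((3:ℝ)/2)) := by
  rw [← ofReal_integral_eq_lintegral_ofReal ((integrable_gauss hb).const_mul c)
      (Filter.Eventually.of_forall fun v => by positivity)]
  rw [integral_const_mul, integral_gauss hb]

lemma lint_mx : ∫⁻ v : E3, ENNReal.ofReal (Mx v) = 1 := by
  have h12 : (0:ℝ) < 1/2 := by norm_num
  have : ∀ v : E3, Mx v = (2 * Real.pi) ^ (-(3:ℝ)/2) * Real.exp (-(1/2) * ‖v‖ ^ 2) := by
    intro v; unfold Mx; ring_nf
  simp only [this]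
  rw [lint_gauss h12 (by positivity)]
  have hπ : Real.pi / (1/2) = 2 * Real.pi := by ring
  rw [hπ, ← Real.rpow_add (by positivity)]
  norm_num

/-- If `‖g u‖² ≤ h u` pointwise with `∫⁻ ofReal h ≤ ofReal (d²)`, `0 ≤ d`,
then `eLpNorm g 2 ≤ ofReal d`. -/
lemma elpnorm_le_of_sq {g : E3 → ℂ} {h : E3 → ℝ} {d : ℝ} (hd : 0 ≤ d)
    (hpt : ∀ u, ‖g u‖ ^ 2 ≤ h u)
    (hint : ∫⁻ u, ENNReal.ofReal (h u) ≤ ENNReal.ofReal (d ^ 2)) :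
    eLpNorm g 2 volume ≤ ENNReal.ofReal d := by
  rw [eLpNorm_eq_lintegral_rpow_enorm_toReal two_ne_zero ENNReal.ofNat_ne_top]
  have h2 : (2:ℝ≥0∞).toReal = (2:ℝ) := by simp
  rw [h2]
  have key : ∫⁻ u, ‖g u‖ₑ ^ (2:ℝ) ≤ ENNReal.ofReal (d ^ 2) := by
    refine le_trans (lintegral_mono fun u => ?_) hint
    rw [← ofReal_norm,
      ENNReal.ofReal_rpow_of_nonneg (norm_nonneg _) (by norm_num)]
    refine ENNReal.ofReal_le_ofReal ?_
    rw [show ((2:ℝ)) = ((2:ℕ):ℝ) by norm_num, Real.rpow_natCast]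
    exact hpt u
  calc (∫⁻ u, ‖g u‖ₑ ^ (2:ℝ)) ^ (1/(2:ℝ))
      ≤ (ENNReal.ofReal (d ^ 2)) ^ (1/(2:ℝ)) := by
        exact ENNReal.rpow_le_rpow key (by norm_num)
    _ = ENNReal.ofReal d := by
        rw [ENNReal.ofReal_rpow_of_nonneg (by positivity) (by norm_num)]
        congr 1
        rw [show (d^2 : ℝ) = d ^ ((2:ℕ):ℝ) by rw [Real.rpow_natCast],
          ← Real.rpow_mul hd]
        norm_num

/-- eLpNorm bound for a function dominated by `b • √Mx`. -/
lemma elpnorm_le_sqrtMx {g : E3 → ℂ} {b : ℝ} (hb : 0 ≤ b)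
    (hpt : ∀ u, ‖g u‖ ≤ b * Real.sqrt (Mx u)) :
    eLpNorm g 2 volume ≤ ENNReal.ofReal b := by
  refine elpnorm_le_of_sq hb (h := fun u => b ^ 2 * Mx u) (fun u => ?_) ?_
  · have h1 : ‖g u‖ ^ 2 ≤ (b * Real.sqrt (Mx u)) ^ 2 :=
      pow_le_pow_left₀ (norm_nonneg _) (hpt u) 2
    calc ‖g u‖ ^ 2 ≤ (b * Real.sqrt (Mx u)) ^ 2 := h1
      _ = b ^ 2 * Mx u := by
          rw [mul_pow, Real.sq_sqrt (mx_pos u).le]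
  · calc ∫⁻ u, ENNReal.ofReal (b ^ 2 * Mx u)
        = ∫⁻ u, ENNReal.ofReal (b ^ 2) * ENNReal.ofReal (Mx u) := by
          simp_rw [← ENNReal.ofReal_mul (by positivity : (0:ℝ) ≤ b ^ 2)]
      _ = ENNReal.ofReal (b ^ 2) * ∫⁻ u, ENNReal.ofReal (Mx u) :=
          lintegral_const_mul' _ _ ENNReal.ofReal_ne_top
      _ = ENNReal.ofReal (b ^ 2) := by rw [lint_mx, mul_one]
      _ ≤ ENNReal.ofReal (b ^ 2) := le_rfl

lemma sq_norm_mx_le (v : E3) :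
    ‖v‖ ^ 2 * Mx v ≤ (2 * Real.pi) ^ (-(3:ℝ)/2) * 4 * Real.exp (-(1/4) * ‖v‖ ^ 2) := by
  unfold Mx
  have h1 : ‖v‖ ^ 2 * Real.exp (-(1/4) * ‖v‖ ^ 2) ≤ 4 := by
    have := Real.add_one_le_exp (‖v‖ ^ 2 / 4)
    have he : (0:ℝ) < Real.exp (‖v‖ ^ 2 / 4) := Real.exp_pos _
    rw [show (-(1/4) * ‖v‖^2 : ℝ) = -(‖v‖^2/4) by ring, Real.exp_neg]
    rw [mul_inv_le_iff₀ he]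
    nlinarith
  have hsplit : Real.exp (-‖v‖ ^ 2 / 2) =
      Real.exp (-(1/4) * ‖v‖ ^ 2) * Real.exp (-(1/4) * ‖v‖ ^ 2) := by
    rw [← Real.exp_add]; ring_nf
  have hc : (0:ℝ) < (2 * Real.pi) ^ (-(3:ℝ)/2) := by positivity
  have he4 : (0:ℝ) < Real.exp (-(1/4) * ‖v‖ ^ 2) := Real.exp_pos _
  calc ‖v‖ ^ 2 * ((2 * Real.pi) ^ (-(3:ℝ)/2) * Real.exp (-‖v‖ ^ 2 / 2))
      = (2 * Real.pi) ^ (-(3:ℝ)/2) *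
        ((‖v‖ ^ 2 * Real.exp (-(1/4) * ‖v‖ ^ 2)) * Real.exp (-(1/4) * ‖v‖ ^ 2)) := by
        rw [hsplit]; ring
    _ ≤ (2 * Real.pi) ^ (-(3:ℝ)/2) * (4 * Real.exp (-(1/4) * ‖v‖ ^ 2)) := by
        refine mul_le_mul_of_nonneg_left ?_ hc.le
        exact mul_le_mul_of_nonneg_right h1 he4.le
    _ = (2 * Real.pi) ^ (-(3:ℝ)/2) * 4 * Real.exp (-(1/4) * ‖v‖ ^ 2) := by ring

lemma gauss_const_le : (2 * Real.pi) ^ (-(3:ℝ)/2) * 4 * (Real.pi / (1/4)) ^ ((3:ℝ)/2) ≤ 16 := by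
  have hπ : (0:ℝ) < Real.pi := Real.pi_pos
  have h1 : Real.pi / (1/4) = 4 * Real.pi := by ring
  rw [h1]
  have h2 : (4 * Real.pi) ^ ((3:ℝ)/2) = (2:ℝ) ^ ((3:ℝ)/2) * (2 * Real.pi) ^ ((3:ℝ)/2) := by
    rw [← Real.mul_rpow (by norm_num) (by positivity)]
    norm_num; ring_nf
  rw [h2, show ((2 * Real.pi) ^ (-(3:ℝ)/2) * 4 * ((2:ℝ) ^ ((3:ℝ)/2) * (2 * Real.pi) ^ ((3:ℝ)/2)))
      = 4 * (2:ℝ) ^ ((3:ℝ)/2) * ((2 * Real.pi) ^ (-(3:ℝ)/2) * (2 * Real.pi) ^ ((3:ℝ)/2)) by ring]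
  rw [← Real.rpow_add (by positivity)]
  norm_num
  have : (2:ℝ) ^ ((3:ℝ)/2) ≤ (2:ℝ) ^ ((2:ℝ)) :=
    Real.rpow_le_rpow_of_exponent_le (by norm_num) (by norm_num)
  have h4 : (2:ℝ) ^ ((2:ℝ)) = 4 := by
    rw [show ((2:ℝ)) = ((2:ℕ):ℝ) by norm_num, Real.rpow_natCast]; norm_num
  nlinarith

/-- The L² bound on the rank-one profile `G`. -/
lemma elpnorm_G_le (ξ : E3) (hξ : ξ ≠ 0) :
    eLpNorm (fun v : E3 => ((((‖ξ‖^2)⁻¹ * (inner ℝ v ξ : ℝ) * Real.sqrt (Mx v)) : ℝ) : ℂ))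
      2 volume ≤ ENNReal.ofReal (4 * ‖ξ‖⁻¹) := by
  have hξ0 : (0:ℝ) < ‖ξ‖ := norm_pos_iff.mpr hξ
  refine elpnorm_le_of_sq (by positivity)
    (h := fun v => ‖ξ‖⁻¹ ^ 2 * ((2 * Real.pi) ^ (-(3:ℝ)/2) * 4 * Real.exp (-(1/4) * ‖v‖ ^ 2)))
    (fun v => ?_) ?_
  · have hin : |(inner ℝ v ξ : ℝ)| ≤ ‖v‖ * ‖ξ‖ := abs_real_inner_le_norm v ξ
    have h1 : ‖(((((‖ξ‖^2)⁻¹ * (inner ℝ v ξ : ℝ) * Real.sqrt (Mx v)) : ℝ)) : ℂ)‖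
        = |(‖ξ‖^2)⁻¹ * (inner ℝ v ξ : ℝ) * Real.sqrt (Mx v)| := by
      rw [Complex.norm_real, Real.norm_eq_abs]
    have habs : |(‖ξ‖^2)⁻¹ * (inner ℝ v ξ : ℝ) * Real.sqrt (Mx v)|
        ≤ ‖ξ‖⁻¹ * ‖v‖ * Real.sqrt (Mx v) := by
      rw [abs_mul, abs_mul, abs_of_nonneg (show (0:ℝ) ≤ (‖ξ‖^2)⁻¹ by positivity),
        abs_of_nonneg (Real.sqrt_nonneg _)]
      refine mul_le_mul_of_nonneg_right ?_ (Real.sqrt_nonneg _)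
      calc (‖ξ‖ ^ 2)⁻¹ * |(inner ℝ v ξ : ℝ)| ≤ (‖ξ‖ ^ 2)⁻¹ * (‖v‖ * ‖ξ‖) :=
            mul_le_mul_of_nonneg_left hin (by positivity)
        _ = ‖ξ‖⁻¹ * ‖v‖ := by field_simp
    calc ‖(((((‖ξ‖^2)⁻¹ * (inner ℝ v ξ : ℝ) * Real.sqrt (Mx v)) : ℝ)) : ℂ)‖ ^ 2
        = |(‖ξ‖^2)⁻¹ * (inner ℝ v ξ : ℝ) * Real.sqrt (Mx v)| ^ 2 := by rw [h1]
      _ ≤ (‖ξ‖⁻¹ * ‖v‖ * Real.sqrt (Mx v)) ^ 2 := pow_le_pow_left₀ (abs_nonneg _) habs 2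
      _ = ‖ξ‖⁻¹ ^ 2 * (‖v‖ ^ 2 * Mx v) := by
          rw [mul_pow, mul_pow, Real.sq_sqrt (mx_pos v).le]; ring
      _ ≤ ‖ξ‖⁻¹ ^ 2 * ((2 * Real.pi) ^ (-(3:ℝ)/2) * 4 * Real.exp (-(1/4) * ‖v‖ ^ 2)) :=
          mul_le_mul_of_nonneg_left (sq_norm_mx_le v) (by positivity)
  · have h14 : (0:ℝ) < 1/4 := by norm_num
    have hc : (0:ℝ) ≤ ‖ξ‖⁻¹ ^ 2 * ((2 * Real.pi) ^ (-(3:ℝ)/2) * 4) := by positivity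
    calc ∫⁻ v : E3, ENNReal.ofReal (‖ξ‖⁻¹ ^ 2 *
          ((2 * Real.pi) ^ (-(3:ℝ)/2) * 4 * Real.exp (-(1/4) * ‖v‖ ^ 2)))
        = ∫⁻ v : E3, ENNReal.ofReal (‖ξ‖⁻¹ ^ 2 * ((2 * Real.pi) ^ (-(3:ℝ)/2) * 4) *
            Real.exp (-(1/4) * ‖v‖ ^ 2)) := by
          congr 1; funext v; ring_nf
      _ = ENNReal.ofReal (‖ξ‖⁻¹ ^ 2 * ((2 * Real.pi) ^ (-(3:ℝ)/2) * 4) *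
            (Real.pi / (1/4)) ^ ((3:ℝ)/2)) := lint_gauss h14 hc
      _ ≤ ENNReal.ofReal ((4 * ‖ξ‖⁻¹) ^ 2) := by
          refine ENNReal.ofReal_le_ofReal ?_
          have := gauss_const_le
          have hp : (0:ℝ) < (Real.pi / (1/4)) ^ ((3:ℝ)/2) := by positivity
          nlinarith [sq_nonneg (‖ξ‖⁻¹), inv_pos.mpr hξ0]

/-- The core rank-one Cauchy–Schwarz bound. -/
lemma key_bound (ν : E3 → ℝ) (hνm : Measurable ν)
    (lam : ℂ) (ε : ℝ) (ξ : E3) (hξ : ξ ≠ 0)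
    (f : E3 → ℂ) (hf : MemLp f 2 volume)
    {b : ℝ} (hb : 0 ≤ b)
    (hK : ∀ u : E3,
      ‖(lam + (ν u : ℂ) + Complex.I * ((ε * (inner ℝ u ξ : ℝ) : ℝ) : ℂ))⁻¹‖ ≤ b) :
    eLpNorm (Smap ν lam ε ξ f) 2 volume ≤
      ENNReal.ofReal (4 * ‖ξ‖⁻¹ * b) * eLpNorm f 2 volume := by
  set K : E3 → ℂ :=
    fun u => (lam + (ν u : ℂ) + Complex.I * ((ε * (inner ℝ u ξ : ℝ) : ℝ) : ℂ))⁻¹ with hKdef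
  set c : ℂ := ∫ u : E3, K u * f u * ((Real.sqrt (Mx u) : ℝ) : ℂ) with hcdef
  set G : E3 → ℂ :=
    fun v => ((((‖ξ‖^2)⁻¹ * (inner ℝ v ξ : ℝ) * Real.sqrt (Mx v)) : ℝ) : ℂ) with hGdef
  have hS : Smap ν lam ε ξ f = c • G := by
    funext v
    simp only [Smap, hGdef, Pi.smul_apply, smul_eq_mul]
    rw [mul_comm]
  have hKm : Measurable K := by
    apply Measurable.inv
    apply Measurable.add
    · exact measurable_const.add (Complex.measurable_ofReal.comp hνm)
    · apply Measurable.const_mul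
      apply Complex.measurable_ofReal.comp
      apply Measurable.const_mul
      exact (continuous_id.inner continuous_const).measurable
  have hsqM : Measurable fun u : E3 => ((Real.sqrt (Mx u) : ℝ) : ℂ) :=
    Complex.measurable_ofReal.comp (Real.continuous_sqrt.comp mx_cont).measurable
  have hKM : Measurable fun u : E3 => K u * ((Real.sqrt (Mx u) : ℝ) : ℂ) := hKm.mul hsqM
  -- Cauchy–Schwarz bound on the scalar c
  have hc : (‖c‖₊ : ℝ≥0∞) ≤
      eLpNorm (fun u : E3 => K u * ((Real.sqrt (Mx u) : ℝ) : ℂ)) 2 volume *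
        eLpNorm f 2 volume := by
    have h22 : Real.HolderConjugate 2 2 := Real.HolderConjugate.two_two
    have hm1 : AEMeasurable
        (fun u : E3 => (‖K u * ((Real.sqrt (Mx u) : ℝ) : ℂ)‖₊ : ℝ≥0∞)) volume :=
      hKM.nnnorm.coe_nnreal_ennreal.aemeasurable
    have hm2 : AEMeasurable (fun u : E3 => (‖f u‖₊ : ℝ≥0∞)) volume := hf.1.enorm
    calc (‖c‖₊ : ℝ≥0∞)
        ≤ ∫⁻ u : E3, ‖K u * f u * ((Real.sqrt (Mx u) : ℝ) : ℂ)‖₊ :=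
          enorm_integral_le_lintegral_enorm _
      _ = ∫⁻ u : E3, ((fun u : E3 => (‖K u * ((Real.sqrt (Mx u) : ℝ) : ℂ)‖₊ : ℝ≥0∞)) *
            (fun u : E3 => (‖f u‖₊ : ℝ≥0∞))) u := by
          congr 1; funext u
          simp only [Pi.mul_apply, nnnorm_mul, ENNReal.coe_mul]
          ring
      _ ≤ (∫⁻ u : E3, (‖K u * ((Real.sqrt (Mx u) : ℝ) : ℂ)‖₊ : ℝ≥0∞) ^ (2:ℝ)) ^ (1/(2:ℝ)) *
            (∫⁻ u : E3, (‖f u‖₊ : ℝ≥0∞) ^ (2:ℝ)) ^ (1/(2:ℝ)) :=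
          ENNReal.lintegral_mul_le_Lp_mul_Lq volume h22 hm1 hm2
      _ = eLpNorm (fun u : E3 => K u * ((Real.sqrt (Mx u) : ℝ) : ℂ)) 2 volume *
            eLpNorm f 2 volume := by
          rw [eLpNorm_eq_lintegral_rpow_enorm_toReal two_ne_zero ENNReal.ofNat_ne_top,
            eLpNorm_eq_lintegral_rpow_enorm_toReal two_ne_zero ENNReal.ofNat_ne_top]
          norm_num [enorm_eq_nnnorm]
  have hKM2 : eLpNorm (fun u : E3 => K u * ((Real.sqrt (Mx u) : ℝ) : ℂ)) 2 volume ≤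
      ENNReal.ofReal b := by
    refine elpnorm_le_sqrtMx hb fun u => ?_
    rw [norm_mul, Complex.norm_real, Real.norm_eq_abs,
      abs_of_nonneg (Real.sqrt_nonneg _)]
    exact mul_le_mul_of_nonneg_right (hK u) (Real.sqrt_nonneg _)
  calc eLpNorm (Smap ν lam ε ξ f) 2 volume
      = (‖c‖₊ : ℝ≥0∞) * eLpNorm G 2 volume := by rw [hS, eLpNorm_const_smul]; rfl
    _ ≤ (eLpNorm (fun u : E3 => K u * ((Real.sqrt (Mx u) : ℝ) : ℂ)) 2 volume *
          eLpNorm f 2 volume) * ENNReal.ofReal (4 * ‖ξ‖⁻¹) :=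
        mul_le_mul' hc (elpnorm_G_le ξ hξ)
    _ ≤ (ENNReal.ofReal b * eLpNorm f 2 volume) * ENNReal.ofReal (4 * ‖ξ‖⁻¹) :=
        mul_le_mul' (mul_le_mul' hKM2 le_rfl) le_rfl
    _ = ENNReal.ofReal (4 * ‖ξ‖⁻¹ * b) * eLpNorm f 2 volume := by
        rw [ENNReal.ofReal_mul (by positivity : (0:ℝ) ≤ 4 * ‖ξ‖⁻¹)]
        ring
/-- Real part of the denominator. -/
lemma denom_re (ν : E3 → ℝ) (lam : ℂ) (ε : ℝ) (ξ : E3) (u : E3) :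
    (lam + (ν u : ℂ) + Complex.I * ((ε * (inner ℝ u ξ : ℝ) : ℝ) : ℂ)).re = lam.re + ν u := by
  simp [Complex.add_re, Complex.mul_re]

end Stmt12Aux

open Stmt12Aux in
theorem stmt12 (ν₀ ν₁ : ℝ) (hν₀ : 0 < ν₀) (hν₁ : 0 < ν₁) :
    ∃ C > (0:ℝ),
      ∀ ν : EuclideanSpace ℝ (Fin 3) → ℝ, Measurable ν →
        (∀ v, ν₀ * (1 + ‖v‖) ≤ ν v ∧ ν v ≤ ν₁ * (1 + ‖v‖)) →
        ∀ ε ∈ Set.Icc (0:ℝ) 1, ∀ ξ : EuclideanSpace ℝ (Fin 3), ξ ≠ 0 → ∀ δ : ℝ, 0 < δ →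
        ∀ lam : ℂ, -ν₀ + δ ≤ lam.re →
        ∀ f : EuclideanSpace ℝ (Fin 3) → ℂ, MemLp f 2 volume →
          eLpNorm (Smap ν lam ε ξ f) 2 volume ≤
            ENNReal.ofReal (C * δ⁻¹ * ‖ξ‖⁻¹) * eLpNorm f 2 volume ∧
          (lam ≠ 0 →
            eLpNorm (Smap ν lam ε ξ f) 2 volume ≤
              ENNReal.ofReal (C * (δ⁻¹ + 1) * (‖ξ‖⁻¹ + 1) * (‖lam‖)⁻¹) *
                eLpNorm f 2 volume) := by
  refine ⟨4*(1+ν₁)*(1+ν₀⁻¹)+4, by positivity, ?_⟩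
  intro ν hνm hνb ε hε ξ hξ δ hδ lam hlam f hf
  have hξ0 : (0:ℝ) < ‖ξ‖ := norm_pos_iff.mpr hξ
  have hx : (0:ℝ) < ‖ξ‖⁻¹ := inv_pos.mpr hξ0
  have hi : (0:ℝ) < δ⁻¹ := inv_pos.mpr hδ
  have hn : (0:ℝ) < ν₀⁻¹ := inv_pos.mpr hν₀
  have hC4 : (4:ℝ) ≤ 4*(1+ν₁)*(1+ν₀⁻¹)+4 := by nlinarith
  have hden : ∀ u : EuclideanSpace ℝ (Fin 3), δ + ν₀ * ‖u‖ ≤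
      ‖lam + (ν u : ℂ) + Complex.I * ((ε * (inner ℝ u ξ : ℝ) : ℝ) : ℂ)‖ := by
    intro u
    have h1 : δ + ν₀ * ‖u‖ ≤
        (lam + (ν u : ℂ) + Complex.I * ((ε * (inner ℝ u ξ : ℝ) : ℝ) : ℂ)).re := by
      rw [Stmt12Aux.denom_re]
      have := (hνb u).1
      nlinarith [norm_nonneg u]
    exact h1.trans (Complex.re_le_norm _)
  have hdpos : ∀ u : EuclideanSpace ℝ (Fin 3), (0:ℝ) <
      ‖lam + (ν u : ℂ) + Complex.I * ((ε * (inner ℝ u ξ : ℝ) : ℝ) : ℂ)‖ :=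
    fun u => lt_of_lt_of_le (by positivity) (hden u)
  constructor
  · -- first bound
    have hK1 : ∀ u : EuclideanSpace ℝ (Fin 3),
        ‖(lam + (ν u : ℂ) + Complex.I * ((ε * (inner ℝ u ξ : ℝ) : ℝ) : ℂ))⁻¹‖ ≤ δ⁻¹ := by
      intro u
      rw [norm_inv]
      have hd : δ ≤ ‖lam + (ν u : ℂ) +
          Complex.I * ((ε * (inner ℝ u ξ : ℝ) : ℝ) : ℂ)‖ := by
        refine le_trans ?_ (hden u)
        nlinarith [norm_nonneg u]
      exact inv_anti₀ hδ hd
    have h1 := Stmt12Aux.key_bound ν hνm lam ε ξ hξ f hf hi.le hK1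
    refine h1.trans (mul_le_mul_left (ENNReal.ofReal_le_ofReal ?_) _)
    nlinarith [mul_nonneg hi.le hx.le]
  · -- second bound
    intro hlam0
    have hl : (0:ℝ) < ‖lam‖ := norm_pos_iff.mpr hlam0
    set B : ℝ := 1 + ν₁*δ⁻¹ + ν₁*ν₀⁻¹ + ‖ξ‖*ν₀⁻¹ with hB
    have hBpos : (0:ℝ) < B := by positivity
    have hK2 : ∀ u : EuclideanSpace ℝ (Fin 3),
        ‖(lam + (ν u : ℂ) + Complex.I * ((ε * (inner ℝ u ξ : ℝ) : ℝ) : ℂ))⁻¹‖ ≤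
          B * (‖lam‖)⁻¹ := by
      intro u
      set d : ℝ := ‖lam + (ν u : ℂ) +
        Complex.I * ((ε * (inner ℝ u ξ : ℝ) : ℝ) : ℂ)‖ with hd
      have hd0 : 0 < d := hdpos u
      have htri : ‖lam‖ ≤ d + ν u + ε * |(inner ℝ u ξ : ℝ)| := by
        have heq : lam = (lam + (ν u : ℂ) + Complex.I * ((ε * (inner ℝ u ξ : ℝ) : ℝ) : ℂ))
            - ((ν u : ℂ) + Complex.I * ((ε * (inner ℝ u ξ : ℝ) : ℝ) : ℂ)) := by ring
        calc ‖lam‖ = ‖lam‖ := rfl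
          _ ≤ ‖lam + (ν u : ℂ) + Complex.I * ((ε * (inner ℝ u ξ : ℝ) : ℝ) : ℂ)‖ +
              ‖(ν u : ℂ) + Complex.I * ((ε * (inner ℝ u ξ : ℝ) : ℝ) : ℂ)‖ := by
            conv_lhs => rw [heq]
            exact norm_sub_le _ _
          _ ≤ d + (ν u + ε * |(inner ℝ u ξ : ℝ)|) := by
            refine add_le_add (le_rfl) ?_
            refine (norm_add_le _ _).trans ?_
            have h1 : ‖((ν u : ℝ) : ℂ)‖ = ν u := by
              rw [Complex.norm_real, Real.norm_eq_abs]
              have := (hνb u).1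
              have : 0 ≤ ν u := by nlinarith [norm_nonneg u]
              exact abs_of_nonneg this
            have h2 : ‖Complex.I * ((ε * (inner ℝ u ξ : ℝ) : ℝ) : ℂ)‖ =
                ε * |(inner ℝ u ξ : ℝ)| := by
              rw [norm_mul, Complex.norm_I, one_mul, Complex.norm_real, Real.norm_eq_abs,
                abs_mul, abs_of_nonneg hε.1]
            rw [h1, h2]
          _ = d + ν u + ε * |(inner ℝ u ξ : ℝ)| := by ring
      have hbound : ‖lam‖ ≤ B * d := by
        have hin : |(inner ℝ u ξ : ℝ)| ≤ ‖u‖ * ‖ξ‖ := abs_real_inner_le_norm u ξ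
        have hνu := (hνb u).2
        have hδc : δ * δ⁻¹ = 1 := mul_inv_cancel₀ hδ.ne'
        have hνc : ν₀ * ν₀⁻¹ = 1 := mul_inv_cancel₀ hν₀.ne'
        have e1 : ν₁ * (1 + ‖u‖) ≤ (ν₁*δ⁻¹ + ν₁*ν₀⁻¹) * (δ + ν₀*‖u‖) := by
          have expand : (ν₁*δ⁻¹ + ν₁*ν₀⁻¹) * (δ + ν₀*‖u‖)
              = ν₁*(δ⁻¹*δ) + ν₁*δ⁻¹*(ν₀*‖u‖) + ν₁*ν₀⁻¹*δ + ν₁*(ν₀⁻¹*ν₀)*‖u‖ := by ring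
          rw [expand, inv_mul_cancel₀ hδ.ne', inv_mul_cancel₀ hν₀.ne']
          have p1 : (0:ℝ) ≤ ν₁*δ⁻¹*(ν₀*‖u‖) := by positivity
          have p2 : (0:ℝ) ≤ ν₁*ν₀⁻¹*δ := by positivity
          nlinarith
        have e2 : ‖u‖ * ‖ξ‖ ≤ (‖ξ‖*ν₀⁻¹) * (δ + ν₀*‖u‖) := by
          have expand : (‖ξ‖*ν₀⁻¹) * (δ + ν₀*‖u‖)
              = ‖ξ‖*ν₀⁻¹*δ + ‖ξ‖*(ν₀⁻¹*ν₀)*‖u‖ := by ring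
          rw [expand, inv_mul_cancel₀ hν₀.ne']
          have p1 : (0:ℝ) ≤ ‖ξ‖*ν₀⁻¹*δ := by positivity
          nlinarith
        have e3 : ε * |(inner ℝ u ξ : ℝ)| ≤ ‖u‖ * ‖ξ‖ := by
          have h0 : 0 ≤ |(inner ℝ u ξ : ℝ)| := abs_nonneg _
          nlinarith [hε.1, hε.2, mul_nonneg (norm_nonneg u) (norm_nonneg ξ)]
        have hcoef : (0:ℝ) ≤ ν₁*δ⁻¹ + ν₁*ν₀⁻¹ + ‖ξ‖*ν₀⁻¹ := by positivity
        have hstep := mul_le_mul_of_nonneg_left (hden u) hcoef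
        rw [← hd] at hstep
        rw [hB]
        linarith [htri, hνu, e1, e2, e3, hstep]
      rw [norm_inv, ← hd]
      have hmul : ‖lam‖ * d⁻¹ ≤ B := by
        rw [mul_inv_le_iff₀ hd0]; linarith
      calc d⁻¹ = (‖lam‖)⁻¹ * (‖lam‖ * d⁻¹) := by
            field_simp
        _ ≤ (‖lam‖)⁻¹ * B :=
            mul_le_mul_of_nonneg_left hmul (inv_nonneg.mpr hl.le)
        _ = B * (‖lam‖)⁻¹ := mul_comm _ _
    have hb2 : (0:ℝ) ≤ B * (‖lam‖)⁻¹ := by positivity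
    have h2 := Stmt12Aux.key_bound ν hνm lam ε ξ hξ f hf hb2 hK2
    refine h2.trans (mul_le_mul_left (ENNReal.ofReal_le_ofReal ?_) _)
    have hxc : ‖ξ‖⁻¹ * ‖ξ‖ = 1 := inv_mul_cancel₀ hξ0.ne'
    have hmain : 4 * ‖ξ‖⁻¹ * B ≤ (4*(1+ν₁)*(1+ν₀⁻¹)+4) * (δ⁻¹ + 1) * (‖ξ‖⁻¹ + 1) := by
      have hexp : 4 * ‖ξ‖⁻¹ * B = 4*‖ξ‖⁻¹ + 4*ν₁*δ⁻¹*‖ξ‖⁻¹ + 4*ν₁*ν₀⁻¹*‖ξ‖⁻¹ +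
          4*(‖ξ‖⁻¹*‖ξ‖)*ν₀⁻¹ := by rw [hB]; ring
      rw [hexp, hxc]
      have q01 : (0:ℝ) ≤ δ⁻¹*‖ξ‖⁻¹ := by positivity
      have q02 : (0:ℝ) ≤ ν₁*δ⁻¹ := by positivity
      have q03 : (0:ℝ) ≤ ν₁*‖ξ‖⁻¹ := by positivity
      have q04 : (0:ℝ) ≤ ν₁*ν₀⁻¹ := by positivity
      have q05 : (0:ℝ) ≤ ν₀⁻¹*δ⁻¹ := by positivity
      have q06 : (0:ℝ) ≤ ν₀⁻¹*‖ξ‖⁻¹ := by positivity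
      have q07 : (0:ℝ) ≤ ν₀⁻¹*δ⁻¹*‖ξ‖⁻¹ := by positivity
      have q08 : (0:ℝ) ≤ ν₁*ν₀⁻¹*δ⁻¹ := by positivity
      have q09 : (0:ℝ) ≤ ν₁*ν₀⁻¹*‖ξ‖⁻¹ := by positivity
      have q10 : (0:ℝ) ≤ ν₁*ν₀⁻¹*δ⁻¹*‖ξ‖⁻¹ := by positivity
      have q11 : (0:ℝ) ≤ ν₁*δ⁻¹*‖ξ‖⁻¹ := by positivity
      linarith [q01, q02, q03, q04, q05, q06, q07, q08, q09, q10, q11,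
        hν₁.le, hi.le, hx.le, hn.le]
    calc 4 * ‖ξ‖⁻¹ * (B * (‖lam‖)⁻¹)
        = (4 * ‖ξ‖⁻¹ * B) * (‖lam‖)⁻¹ := by ring
      _ ≤ ((4*(1+ν₁)*(1+ν₀⁻¹)+4) * (δ⁻¹ + 1) * (‖ξ‖⁻¹ + 1)) * (‖lam‖)⁻¹ :=
          mul_le_mul_of_nonneg_right hmain (inv_nonneg.mpr hl.le)
      _ = (4*(1+ν₁)*(1+ν₀⁻¹)+4) * (δ⁻¹ + 1) * (‖ξ‖⁻¹ + 1) * (‖lam‖)⁻¹ := by ring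

end
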